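/- The function g3(γ) = ln(1+γ) / ((γ²+2γ)·((γ²+2γ) − ln(1+γ))) is strictly decreasing on (0, ∞). -/

import Mathlib

/-- g₃(γ) = ln(1+γ)/((γ²+2γ)·((γ²+2γ) − ln(1+γ))). -/
noncomputable def g3 (γ : ℝ) : ℝ :=
  Real.log (1 + γ) / ((γ ^ 2 + 2 * γ) * ((γ ^ 2 + 2 * γ) - Real.log (1 + γ)))

/-- Auxiliary: the reciprocal of g₃. -/
noncomputable def h3 (γ : ℝ) : ℝ :=
  (γ ^ 2 + 2 * γ) ^ 2 / Real.log (1 + γ) - (γ ^ 2 + 2 * γ)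

lemma h3_hasDerivAt (x : ℝ) (hx : 0 < x) :
    HasDerivAt h3
      (((2 * (x ^ 2 + 2 * x) * (2 * x + 2)) * Real.log (1 + x)
        - (x ^ 2 + 2 * x) ^ 2 * (1 / (1 + x))) / (Real.log (1 + x)) ^ 2
        - (2 * x + 2)) x := by
  have h2 : (0:ℝ) < 1 + x := by linarith
  have hL0 : 0 < Real.log (1 + x) := Real.log_pos (by linarith)
  have hq : HasDerivAt (fun γ : ℝ => γ ^ 2 + 2 * γ) (2 * x + 2) x := by
    have := (hasDerivAt_pow 2 x).add ((hasDerivAt_id x).const_mul 2)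
    exact this.congr_deriv (by norm_num)
  have hq2 : HasDerivAt (fun γ : ℝ => (γ ^ 2 + 2 * γ) ^ 2)
      (2 * (x ^ 2 + 2 * x) * (2 * x + 2)) x := by
    have := hq.pow 2
    exact this.congr_deriv (by norm_num)
  have h1p : HasDerivAt (fun γ : ℝ => 1 + γ) 1 x := by
    simpa using (hasDerivAt_id x).const_add 1
  have hL : HasDerivAt (fun γ : ℝ => Real.log (1 + γ)) (1 / (1 + x)) x := by
    simpa using h1p.log (by positivity)
  exact (hq2.div hL (ne_of_gt hL0)).sub hq

lemma log_lower (x : ℝ) (hx : 0 < x) : x ≤ Real.log (1 + x) * (1 + x) := by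
  have h2 : (0:ℝ) < 1 + x := by linarith
  have h := Real.log_le_sub_one_of_pos (show (0:ℝ) < (1 + x)⁻¹ by positivity)
  rw [Real.log_inv] at h
  have h3 : (1 + x)⁻¹ * (1 + x) = 1 := inv_mul_cancel₀ (ne_of_gt h2)
  nlinarith [h, h3]

lemma log_upper (x : ℝ) (hx : 0 < x) : Real.log (1 + x) ≤ x := by
  have := Real.log_le_sub_one_of_pos (show (0:ℝ) < 1 + x by linarith)
  linarith

lemma h3_deriv_pos (x : ℝ) (hx : 0 < x) :
    0 < ((2 * (x ^ 2 + 2 * x) * (2 * x + 2)) * Real.log (1 + x)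
        - (x ^ 2 + 2 * x) ^ 2 * (1 / (1 + x))) / (Real.log (1 + x)) ^ 2
        - (2 * x + 2) := by
  set L := Real.log (1 + x) with hLdef
  have h2 : (0:ℝ) < 1 + x := by linarith
  have hL0 : 0 < L := Real.log_pos (by linarith)
  have hLle : L ≤ x := log_upper x hx
  have hLge : x ≤ L * (1 + x) := log_lower x hx
  have hL2 : (0:ℝ) < L ^ 2 := by positivity
  rw [sub_pos, lt_div_iff₀ hL2]
  have hinv : (x ^ 2 + 2 * x) ^ 2 * (1 / (1 + x)) * (1 + x) = (x ^ 2 + 2 * x) ^ 2 := by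
    field_simp
  have hP : 0 ≤ (L * (1 + x) - x) * (x - L) :=
    mul_nonneg (by linarith) (by linarith)
  nlinarith [hP, mul_pos hx hL0, mul_nonneg hP h2.le, mul_nonneg hP hx.le,
    mul_pos h2 h2, sq_nonneg (x - L), mul_pos (mul_pos hx hx) hL0,
    mul_nonneg (mul_nonneg hP hx.le) hx.le]

lemma h3_strictMono : StrictMonoOn h3 (Set.Ioi (0 : ℝ)) := by
  apply strictMonoOn_of_deriv_pos (convex_Ioi 0)
  · intro x hx
    exact ((h3_hasDerivAt x hx).continuousAt).continuousWithinAt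
  · intro x hx
    rw [interior_Ioi] at hx
    rw [(h3_hasDerivAt x hx).deriv]
    exact h3_deriv_pos x hx

lemma h3_pos (x : ℝ) (hx : 0 < x) : 0 < h3 x := by
  have hL0 : 0 < Real.log (1 + x) := Real.log_pos (by linarith)
  have hLle : Real.log (1 + x) ≤ x := log_upper x hx
  have hq : 0 < x ^ 2 + 2 * x := by nlinarith
  have hqL : Real.log (1 + x) < x ^ 2 + 2 * x := by nlinarith
  unfold h3
  rw [sub_pos, lt_div_iff₀ hL0]
  nlinarith [mul_pos hq (sub_pos.2 hqL)]

lemma g3_eq (x : ℝ) (hx : 0 < x) : g3 x = (h3 x)⁻¹ := by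
  have hL0 : 0 < Real.log (1 + x) := Real.log_pos (by linarith)
  have hq : 0 < x ^ 2 + 2 * x := by nlinarith
  unfold g3 h3
  rw [show (x ^ 2 + 2 * x) ^ 2 / Real.log (1 + x) - (x ^ 2 + 2 * x)
      = ((x ^ 2 + 2 * x) * ((x ^ 2 + 2 * x) - Real.log (1 + x))) / Real.log (1 + x) from by
    field_simp, inv_div]

/-- g₃ is strictly decreasing on (0, ∞). -/
theorem stmt_16 : StrictAntiOn g3 (Set.Ioi (0 : ℝ)) := by
  intro x hx y hy hxy
  rw [Set.mem_Ioi] at hx hy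
  rw [g3_eq x hx, g3_eq y hy]
  exact inv_strictAnti₀ (h3_pos x hx) (h3_strictMono hx hy hxy)
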